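/- The function vectors of the 3^n - 1 nonzero strictly linear functions f_v(x) = v·x (dot product mod 3) from F_3^n to F_3, viewed as vectors in R^{3^n} (with entries the values 0,1,2 regarded as real numbers), together with the constant all-ones vector, form a linearly independent set over R. -/

import Mathlib

noncomputable def zeta3 : ℂ := Complex.exp (2 * Real.pi * Complex.I / 3)

lemma zeta3_prim : IsPrimitiveRoot zeta3 3 := by
  simpa [zeta3] using Complex.isPrimitiveRoot_exp 3 (by norm_num)

lemma zeta3_pow : zeta3 ^ 3 = 1 := zeta3_prim.pow_eq_one

lemma zeta3_sum : zeta3 ^ 2 + zeta3 + 1 = 0 := by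
  have h1 : zeta3 ≠ 1 := zeta3_prim.ne_one (by norm_num)
  have h : (zeta3 - 1) * (zeta3 ^ 2 + zeta3 + 1) = 0 := by
    linear_combination zeta3_pow
  rcases mul_eq_zero.1 h with h' | h'
  · exact absurd (sub_eq_zero.1 h') h1
  · exact h'

def dotHom {n : ℕ} (v : Fin n → ZMod 3) : (Fin n → ZMod 3) →+ ZMod 3 where
  toFun x := ∑ i, v i * x i
  map_zero' := by simp
  map_add' x y := by simp [mul_add, Finset.sum_add_distrib]

noncomputable def chi3 {n : ℕ} (v : Fin n → ZMod 3) : AddChar (Fin n → ZMod 3) ℂ :=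
  (AddChar.zmodChar 3 zeta3_pow).compAddMonoidHom (dotHom v)

lemma chi3_apply {n : ℕ} (v x : Fin n → ZMod 3) :
    chi3 v x = zeta3 ^ (∑ i, v i * x i).val := rfl

lemma chi3_neg {n : ℕ} (v x : Fin n → ZMod 3) :
    chi3 (-v) x = zeta3 ^ (-(∑ i, v i * x i) : ZMod 3).val := by
  rw [chi3_apply]
  congr 2
  simp [neg_mul, Finset.sum_neg_distrib]

lemma chi3_inj {n : ℕ} : Function.Injective (chi3 (n := n)) := by
  intro v w h
  funext j
  have hx := congrArg (fun ψ : AddChar (Fin n → ZMod 3) ℂ => ψ ((Pi.single j 1 : Fin n → ZMod 3))) h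
  simp only [chi3_apply] at hx
  have hv : ∀ u : Fin n → ZMod 3, ∑ i, u i * (Pi.single j 1 : Fin n → ZMod 3) i = u j := by
    intro u
    simp [Pi.single_apply, mul_ite, Finset.sum_ite_eq']
  rw [hv v, hv w] at hx
  exact ZMod.val_injective 3 (zeta3_prim.pow_inj (ZMod.val_lt _) (ZMod.val_lt _) hx)

noncomputable def aC : ℂ := (zeta3 ^ 2 + 2 * zeta3) / 3
noncomputable def bC : ℂ := (zeta3 + 2 * zeta3 ^ 2) / 3

lemma val_eq (t : ZMod 3) :
    (t.val : ℂ) = 1 + aC * zeta3 ^ t.val + bC * zeta3 ^ (-t).val := by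
  have hs := zeta3_sum
  have hp := zeta3_pow
  fin_cases t
  · show ((0 : ZMod 3).val : ℂ) = 1 + aC * zeta3 ^ (0 : ZMod 3).val + bC * zeta3 ^ (-(0 : ZMod 3)).val
    norm_num [aC, bC, show ((0 : ZMod 3)).val = 0 from rfl, show (-(0 : ZMod 3)).val = 0 from rfl]
    linear_combination (-(1:ℂ)) * hs
  · show ((1 : ZMod 3).val : ℂ) = 1 + aC * zeta3 ^ (1 : ZMod 3).val + bC * zeta3 ^ (-(1 : ZMod 3)).val
    norm_num [aC, bC, show ((1 : ZMod 3)).val = 1 from rfl, show (-(1 : ZMod 3)).val = 2 from rfl]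
    linear_combination (-(2*zeta3)/3) * hs + (-(2*zeta3)/3) * hp
  · show ((2 : ZMod 3).val : ℂ) = 1 + aC * zeta3 ^ (2 : ZMod 3).val + bC * zeta3 ^ (-(2 : ZMod 3)).val
    norm_num [aC, bC, show ((2 : ZMod 3)).val = 2 from rfl, show (-(2 : ZMod 3)).val = 1 from rfl]
    linear_combination ((2:ℂ)/3 - 1) * hs + (-(4+zeta3)/3) * hp

lemma aC_sub_bC : aC - bC ≠ 0 := by
  intro h
  have hzz : zeta3 = zeta3 ^ 2 := by
    rw [aC, bC] at h
    linear_combination (3:ℂ) * h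
  have := zeta3_prim.pow_inj (show 1 < 3 by norm_num) (show 2 < 3 by norm_num)
    (by rw [pow_one]; exact hzz)
  omega

lemma aC_add_bC : aC + bC = -1 := by
  rw [aC, bC]
  linear_combination zeta3_sum


/-- The function vectors of the `3^n - 1` nonzero strictly linear functions
`f_v(x) = v ⬝ x` (mod 3), viewed in `ℝ^{3^n}` with values `{0,1,2} ⊆ ℝ`,
together with the all-ones vector (indexed by `v = 0`), are linearly independent over `ℝ`. -/
theorem stmt0 (n : ℕ) :
    LinearIndependent ℝ
      (fun (v : Fin n → ZMod 3) (x : Fin n → ZMod 3) =>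
        if v = 0 then (1 : ℝ) else ((∑ i, v i * x i : ZMod 3).val : ℝ)) := by
  classical
  rw [Fintype.linearIndependent_iff]
  intro c hc
  set c' : (Fin n → ZMod 3) → ℂ := fun v => (c v : ℂ) with hc'def
  have hcx : ∀ x : Fin n → ZMod 3,
      ∑ v, c' v * (if v = 0 then (1 : ℂ) else ((∑ i, v i * x i : ZMod 3).val : ℂ)) = 0 := by
    intro x
    have h1 := congrFun hc x
    simp only [Finset.sum_apply, Pi.smul_apply, smul_eq_mul, Pi.zero_apply] at h1
    have h2 := congrArg Complex.ofReal h1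
    push_cast [apply_ite Complex.ofReal] at h2
    simpa [hc'def] using h2
  set d : (Fin n → ZMod 3) → ℂ :=
    fun w => if w = 0 then ∑ v, c' v else aC * c' w + bC * c' (-w) with hd_def
  have hchi0 : ∀ x : Fin n → ZMod 3, chi3 (0 : Fin n → ZMod 3) x = 1 := by
    intro x; rw [chi3_apply]; simp
  have hsum : ∀ x : Fin n → ZMod 3, ∑ w, d w * chi3 w x = 0 := by
    intro x
    have lhs_eq : ∑ w, d w * chi3 w x
        = (∑ v, c' v)
          + ((∑ w, if w = 0 then 0 else aC * c' w * chi3 w x)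
            + (∑ w, if w = 0 then 0 else bC * c' (-w) * chi3 w x)) := by
      have step : ∑ w, d w * chi3 w x
          = ∑ w, ((if w = 0 then (∑ v, c' v) else 0)
            + ((if w = 0 then 0 else aC * c' w * chi3 w x)
              + (if w = 0 then 0 else bC * c' (-w) * chi3 w x))) := by
        refine Finset.sum_congr rfl fun w _ => ?_
        by_cases hw : w = 0
        · simp [hd_def, hw, hchi0]
        · simp only [hd_def, if_neg hw]; ring
      rw [step, Finset.sum_add_distrib,
        Finset.sum_ite_eq' Finset.univ (0 : Fin n → ZMod 3) (fun _ => ∑ v, c' v),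
        if_pos (Finset.mem_univ _), Finset.sum_add_distrib]
    have reindex : (∑ w, if w = 0 then 0 else bC * c' (-w) * chi3 w x)
        = ∑ w, if w = 0 then 0 else bC * c' w * chi3 (-w) x := by
      refine Fintype.sum_equiv (Equiv.neg _) _ _ fun w => ?_
      by_cases hw : w = 0
      · simp [hw]
      · rw [if_neg hw, Equiv.neg_apply, if_neg (neg_ne_zero.2 hw), neg_neg]
    have rhs_eq : ∑ v, c' v * (if v = 0 then (1 : ℂ) else ((∑ i, v i * x i : ZMod 3).val : ℂ))
        = (∑ v, c' v)
          + ((∑ w, if w = 0 then 0 else aC * c' w * chi3 w x)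
            + (∑ w, if w = 0 then 0 else bC * c' w * chi3 (-w) x)) := by
      have step : ∑ v, c' v * (if v = 0 then (1 : ℂ) else ((∑ i, v i * x i : ZMod 3).val : ℂ))
          = ∑ v, (c' v + ((if v = 0 then 0 else aC * c' v * chi3 v x)
              + (if v = 0 then 0 else bC * c' v * chi3 (-v) x))) := by
        refine Finset.sum_congr rfl fun v _ => ?_
        by_cases hv : v = 0
        · simp [hv]
        · rw [if_neg hv, if_neg hv, if_neg hv, val_eq, ← chi3_apply v x, ← chi3_neg v x]
          ring
      rw [step, Finset.sum_add_distrib, Finset.sum_add_distrib]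
    rw [lhs_eq, reindex, ← rhs_eq, hcx x]
  have hLI := (AddChar.linearIndependent (Fin n → ZMod 3) ℂ).comp chi3 chi3_inj
  have hd : ∀ w, d w = 0 := by
    refine Fintype.linearIndependent_iff.1 hLI d ?_
    funext x
    simpa [Finset.sum_apply, Function.comp] using hsum x
  have hc0 : ∀ w : Fin n → ZMod 3, w ≠ 0 → c' w = 0 := by
    intro w hw
    have h1 : aC * c' w + bC * c' (-w) = 0 := by simpa [hd_def, if_neg hw] using hd w
    have h2 : aC * c' (-w) + bC * c' w = 0 := by
      have h3 := hd (-w)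
      rw [hd_def] at h3
      simpa [neg_eq_zero, hw, neg_neg] using h3
    have hsub : (aC - bC) * (c' w - c' (-w)) = 0 := by linear_combination h1 - h2
    have hadd : (aC + bC) * (c' w + c' (-w)) = 0 := by linear_combination h1 + h2
    have e1 : c' w = c' (-w) :=
      sub_eq_zero.1 ((mul_eq_zero.1 hsub).resolve_left aC_sub_bC)
    have hne : aC + bC ≠ 0 := by rw [aC_add_bC]; norm_num
    have e2 : c' w + c' (-w) = 0 := (mul_eq_zero.1 hadd).resolve_left hne
    have e3 : (2 : ℂ) * c' w = 0 := by linear_combination e2 + e1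
    exact (mul_eq_zero.1 e3).resolve_left two_ne_zero
  intro v
  by_cases hv : v = 0
  · have h0 : ∑ w, c' w = 0 := by simpa [hd_def] using hd 0
    have hsingle : ∑ w, c' w = c' 0 :=
      Finset.sum_eq_single 0 (fun b _ hb => hc0 b hb)
        (fun h => absurd (Finset.mem_univ _) h)
    have h5 : c' v = 0 := by rw [hv, ← hsingle, h0]
    have h6 : ((c v : ℝ) : ℂ) = 0 := h5
    exact_mod_cast h6
  · have h4 : ((c v : ℝ) : ℂ) = 0 := hc0 v hv
    exact_mod_cast h4
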